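/- Let G be a communication graph consisting of a single t-ring (t > 1). Then any colouring sequence on G completes if and only if the rule recv→•yel (buffered receive colouring, consuming a token) is invoked at least once in the sequence. -/

import Mathlib

/-! Formal framework: communication graphs and the red/yellow/green colouring game
(Brodsky–Pedersen–Wagner, "On the Complexity of Buffer Allocation in Message Passing Systems"),
with receive-side token pools. -/

inductive Colour : Type
  | red | yellow | green
deriving DecidableEq

/-- A communication graph: vertices are partitioned into start/send/receive/end vertices,
`pred u v` means `u` is the component predecessor of `v` (a process arc `u → v`),
`matched u v` is a communication arc from send `u` to its matching receive `v`,
`comp v` is the index of the process component of `v`, and `pos v` is the position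
of `v` within its component chain. -/
structure CommGraph (V : Type) where
  isStart : V → Prop
  isSend : V → Prop
  isRecv : V → Prop
  isEnd : V → Prop
  pred : V → V → Prop
  matched : V → V → Prop
  comp : V → ℕ
  pos : V → ℕ

namespace CommGraph

variable {V : Type}

/-- An arc of the communication graph (process arc or communication arc). -/
def GArc (G : CommGraph V) (u v : V) : Prop := G.pred u v ∨ G.matched u v

/-- Well-formedness of a communication graph: the vertex kinds partition `V`,
components are chains (unique predecessors, positions increase along process arcs),
communication arcs go from sends to receives in different components and form a
partial matching, and the graph is acyclic (arcs admit no infinite descent). -/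
structure WF (G : CommGraph V) : Prop where
  kinds : ∀ v, G.isStart v ∨ G.isSend v ∨ G.isRecv v ∨ G.isEnd v
  start_not_send : ∀ v, G.isStart v → ¬ G.isSend v
  start_not_recv : ∀ v, G.isStart v → ¬ G.isRecv v
  start_not_end : ∀ v, G.isStart v → ¬ G.isEnd v
  send_not_recv : ∀ v, G.isSend v → ¬ G.isRecv v
  send_not_end : ∀ v, G.isSend v → ¬ G.isEnd v
  recv_not_end : ∀ v, G.isRecv v → ¬ G.isEnd v
  pred_unique : ∀ {u u' v}, G.pred u v → G.pred u' v → u = u'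
  pred_comp : ∀ {u v}, G.pred u v → G.comp u = G.comp v
  pred_pos : ∀ {u v}, G.pred u v → G.pos v = G.pos u + 1
  start_no_pred : ∀ {u v}, G.pred u v → ¬ G.isStart v
  has_pred : ∀ v, ¬ G.isStart v → ∃ u, G.pred u v
  matched_send : ∀ {u v}, G.matched u v → G.isSend u
  matched_recv : ∀ {u v}, G.matched u v → G.isRecv v
  matched_comp : ∀ {u v}, G.matched u v → G.comp u ≠ G.comp v
  matched_unique_left : ∀ {u u' v}, G.matched u v → G.matched u' v → u = u'
  matched_unique_right : ∀ {u v v'}, G.matched u v → G.matched u v' → v = v'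
  send_has_match : ∀ v, G.isSend v → ∃ w, G.matched v w
  recv_has_match : ∀ v, G.isRecv v → ∃ w, G.matched w v
  dag : WellFounded fun u v => G.GArc u v

end CommGraph

/-- A state of the colouring game: the colouring, which receive vertices currently
hold a token on their incident communication arc, and the number of available
tokens in each (per-process, receive-side) pool. -/
structure St (V : Type) where
  col : V → Colour
  tok : V → Bool
  pool : ℕ → ℕ

/-- The names of the colouring rules. -/
inductive Rule : Type
  | sendYel | recvYel | recvYelTok | sendGrn | recvGrn | endYel | endGrn
deriving DecidableEq

variable {V : Type}

/-- One move of the colouring game (receive-side buffering: the token used by the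
buffered-receive rule `recvYelTok` comes from the pool of the receiving component,
and is returned when the receive turns green). -/
inductive Step [DecidableEq V] (G : CommGraph V) : Rule → St V → St V → Prop
  | sendYel {s : St V} {v u : V} :
      G.isSend v → s.col v = .red → G.pred u v → s.col u = .green →
      Step G .sendYel s ⟨Function.update s.col v .yellow, s.tok, s.pool⟩
  | recvYel {s : St V} {v u w : V} :
      G.isRecv v → s.col v = .red → G.matched w v → s.col w = .yellow →
      G.pred u v → s.col u = .green →
      Step G .recvYel s ⟨Function.update s.col v .yellow, s.tok, s.pool⟩
  | recvYelTok {s : St V} {v w : V} :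
      G.isRecv v → s.col v = .red → G.matched w v → s.col w = .yellow →
      0 < s.pool (G.comp v) →
      Step G .recvYelTok s ⟨Function.update s.col v .yellow,
        Function.update s.tok v true,
        Function.update s.pool (G.comp v) (s.pool (G.comp v) - 1)⟩
  | sendGrn {s : St V} {v r : V} :
      G.isSend v → s.col v = .yellow → G.matched v r → s.col r = .yellow →
      Step G .sendGrn s ⟨Function.update s.col v .green, s.tok, s.pool⟩
  | recvGrn {s : St V} {v u w : V} :
      G.isRecv v → s.col v = .yellow → G.pred u v → s.col u = .green →
      G.matched w v → s.col w = .green →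
      Step G .recvGrn s ⟨Function.update s.col v .green,
        Function.update s.tok v false,
        if s.tok v then
          Function.update s.pool (G.comp v) (s.pool (G.comp v) + 1)
        else s.pool⟩
  | endYel {s : St V} {v u : V} :
      G.isEnd v → s.col v = .red → G.pred u v → s.col u = .green →
      Step G .endYel s ⟨Function.update s.col v .yellow, s.tok, s.pool⟩
  | endGrn {s : St V} {v : V} :
      G.isEnd v → s.col v = .yellow →
      Step G .endGrn s ⟨Function.update s.col v .green, s.tok, s.pool⟩

/-- `IsSeq G s l` : the list `l` of (rule, state) pairs is a valid colouring sequence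
starting from state `s`. -/
def IsSeq [DecidableEq V] (G : CommGraph V) : St V → List (Rule × St V) → Prop
  | _, [] => True
  | s, p :: l => Step G p.1 s p.2 ∧ IsSeq G p.2 l

/-- The list of states visited by a colouring sequence. -/
def states (s0 : St V) (l : List (Rule × St V)) : List (St V) :=
  s0 :: l.map Prod.snd

/-- The final state of a colouring sequence. -/
def finalSt (s0 : St V) (l : List (Rule × St V)) : St V :=
  (states s0 l).getLast (by simp [states])

open Classical in
/-- The initial state: start vertices green, all others red, no tokens placed,
token pools given by the token assignment `B` (pool of component `i` holds `B i`). -/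
noncomputable def init (G : CommGraph V) (B : ℕ → ℕ) : St V :=
  ⟨fun v => if G.isStart v then Colour.green else Colour.red, fun _ => false, B⟩

/-- A state from which no colouring rule applies. -/
def MaximalFrom [DecidableEq V] (G : CommGraph V) (s : St V) : Prop :=
  ∀ ρ t, ¬ Step G ρ s t

/-- A state is complete when every vertex is green. -/
def Completes (s : St V) : Prop := ∀ v, s.col v = Colour.green

/-- A deadlocking colouring sequence from `s0`: a maximal sequence whose final
colouring has a non-green vertex. -/
def Deadlocks [DecidableEq V] (G : CommGraph V) (s0 : St V) (l : List (Rule × St V)) : Prop :=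
  IsSeq G s0 l ∧ MaximalFrom G (finalSt s0 l) ∧ ¬ Completes (finalSt s0 l)

/-- The system is safe (deadlock free) under token assignment `B`:
every maximal colouring sequence completes. -/
def DeadlockFree [DecidableEq V] (G : CommGraph V) (B : ℕ → ℕ) : Prop :=
  ∀ l, IsSeq G (init G B) l → MaximalFrom G (finalSt (init G B) l) →
    Completes (finalSt (init G B) l)

/-- A state blocks: some yellow send has a matching red receive to which the
buffered-receive rule cannot be applied (no token available). -/
def Blocked (G : CommGraph V) (s : St V) : Prop :=
  ∃ v r, G.matched v r ∧ s.col v = Colour.yellow ∧ s.col r = Colour.red ∧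
    s.pool (G.comp r) = 0

/-- The graph is block free under token assignment `B`: no colouring sequence blocks. -/
def BlockFree [DecidableEq V] (G : CommGraph V) (B : ℕ → ℕ) : Prop :=
  ∀ l, IsSeq G (init G B) l → ¬ Blocked G (finalSt (init G B) l)


/-- A `t`-ring communication graph: `t` process components, each the chain
start → send `s_j` → receive `r_j` → end, where the send of component `(j+1) mod t`
is matched to the receive of component `j`. -/
def ringGraph (t : ℕ) : CommGraph (Fin t × Fin 4) where
  isStart v := (v.2 : ℕ) = 0
  isSend v := (v.2 : ℕ) = 1
  isRecv v := (v.2 : ℕ) = 2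
  isEnd v := (v.2 : ℕ) = 3
  pred u v := u.1 = v.1 ∧ (v.2 : ℕ) = (u.2 : ℕ) + 1
  matched u v := (u.2 : ℕ) = 1 ∧ (v.2 : ℕ) = 2 ∧ (u.1 : ℕ) = ((v.1 : ℕ) + 1) % t
  comp v := v.1
  pos v := v.2


namespace TRing

/-! ### Colour ranks and monotonicity -/

def rk : Colour → ℕ
  | .red => 0
  | .yellow => 1
  | .green => 2

lemma green_of_rk {c : Colour} (h : 2 ≤ rk c) : c = .green := by
  cases c <;> simp_all [rk]

lemma ne_red_of_rk {c : Colour} (h : 1 ≤ rk c) : c ≠ .red := by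
  cases c <;> simp_all [rk]

lemma one_le_rk {c : Colour} (h : c ≠ .red) : 1 ≤ rk c := by
  cases c <;> simp_all [rk]

variable {V : Type} [DecidableEq V] {G : CommGraph V}

lemma step_mono {ρ : Rule} {s s' : St V} (h : Step G ρ s s') (u : V) :
    rk (s.col u) ≤ rk (s'.col u) := by
  cases h <;>
  · dsimp only
    rw [Function.update_apply]
    split
    · next heq => subst heq; simp_all [rk]
    · exact le_rfl

lemma finalSt_cons (s : St V) (p : Rule × St V) (l : List (Rule × St V)) :
    finalSt s (p :: l) = finalSt p.2 l := by
  simp [finalSt, states, List.getLast_cons]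

lemma seq_mono {s : St V} {l : List (Rule × St V)} (h : IsSeq G s l) (u : V) :
    rk (s.col u) ≤ rk ((finalSt s l).col u) := by
  induction l generalizing s with
  | nil => exact le_rfl
  | cons p l ih =>
    rw [finalSt_cons]
    exact le_trans (step_mono h.1 u) (ih h.2)

lemma step_green {ρ : Rule} {s s' : St V} (h : Step G ρ s s') {u : V}
    (hg : s.col u = .green) : s'.col u = .green := by
  apply green_of_rk
  calc 2 = rk (s.col u) := by rw [hg]; rfl
    _ ≤ rk (s'.col u) := step_mono h u

lemma step_ne_red {ρ : Rule} {s s' : St V} (h : Step G ρ s s') {u : V}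
    (hg : s.col u ≠ .red) : s'.col u ≠ .red :=
  ne_red_of_rk (le_trans (one_le_rk hg) (step_mono h u))

lemma isSeq_append {s : St V} {l1 l2 : List (Rule × St V)}
    (h : IsSeq G s (l1 ++ l2)) : IsSeq G s l1 ∧ IsSeq G (finalSt s l1) l2 := by
  induction l1 generalizing s with
  | nil => exact ⟨trivial, h⟩
  | cons p l ih =>
    obtain ⟨h1, h2⟩ := h
    obtain ⟨ha, hb⟩ := ih h2
    exact ⟨⟨h1, ha⟩, by rwa [finalSt_cons]⟩

lemma finalSt_append (s : St V) (l1 l2 : List (Rule × St V)) :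
    finalSt s (l1 ++ l2) = finalSt (finalSt s l1) l2 := by
  induction l1 generalizing s with
  | nil => rfl
  | cons p l ih => rw [List.cons_append, finalSt_cons, finalSt_cons, ih]

lemma seq_inv {P : St V → Prop}
    (hP : ∀ ρ s s', P s → Step G ρ s s' → P s') :
    ∀ {s : St V} {l : List (Rule × St V)}, P s → IsSeq G s l → P (finalSt s l) := by
  intro s l
  induction l generalizing s with
  | nil => intro hs _; exact hs
  | cons p l ih =>
    intro hs hseq
    rw [finalSt_cons]
    exact ih (hP _ _ _ hs hseq.1) hseq.2

/-- Analysis of a vertex that newly becomes green in a step. -/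
lemma step_new_green {ρ : Rule} {s s' : St V} (h : Step G ρ s s') (u : V)
    (h1 : s.col u ≠ .green) (h2 : s'.col u = .green) :
    (∃ r, G.matched u r ∧ s.col r = .yellow) ∨
    (∃ w, G.matched w u ∧ s.col w = .green) ∨ G.isEnd u := by
  cases h with
  | @sendYel _ v u' hv hc hp hu =>
    dsimp only at h2; rw [Function.update_apply] at h2
    split at h2
    · exact Colour.noConfusion h2
    · exact absurd h2 h1
  | @recvYel _ v u' w hv hc hm hw hp hu =>
    dsimp only at h2; rw [Function.update_apply] at h2
    split at h2
    · exact Colour.noConfusion h2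
    · exact absurd h2 h1
  | @recvYelTok _ v w hv hc hm hw hp =>
    dsimp only at h2; rw [Function.update_apply] at h2
    split at h2
    · exact Colour.noConfusion h2
    · exact absurd h2 h1
  | @sendGrn _ v r hs hv hm hr =>
    dsimp only at h2; rw [Function.update_apply] at h2
    split at h2
    · next heq => subst heq; exact Or.inl ⟨r, hm, hr⟩
    · exact absurd h2 h1
  | @recvGrn _ v u' w hr hv hp hu hm hw =>
    dsimp only at h2; rw [Function.update_apply] at h2
    split at h2
    · next heq => subst heq; exact Or.inr (Or.inl ⟨w, hm, hw⟩)
    · exact absurd h2 h1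
  | @endYel _ v u' hv hc hp hu =>
    dsimp only at h2; rw [Function.update_apply] at h2
    split at h2
    · exact Colour.noConfusion h2
    · exact absurd h2 h1
  | @endGrn _ v he hv =>
    dsimp only at h2; rw [Function.update_apply] at h2
    split at h2
    · next heq => subst heq; exact Or.inr (Or.inr he)
    · exact absurd h2 h1

/-! ### The ring graph -/

variable {t : ℕ} [NeZero t]

lemma val_one (ht : 1 < t) : ((1 : Fin t) : ℕ) = 1 := by
  rcases t with _ | _ | t
  · omega
  · omega
  · rfl

lemma val_add_one (ht : 1 < t) (i : Fin t) :
    ((i + 1 : Fin t) : ℕ) = (i.val + 1) % t := by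
  rw [Fin.val_add, val_one ht]

lemma matched_succ (ht : 1 < t) (i : Fin t) :
    (ringGraph t).matched (i + 1, (1 : Fin 4)) (i, (2 : Fin 4)) :=
  ⟨rfl, rfl, by simpa using val_add_one ht i⟩

lemma matched_elim (ht : 1 < t) {u v : Fin t × Fin 4}
    (h : (ringGraph t).matched u v) :
    u = (v.1 + 1, (1 : Fin 4)) ∧ v.2 = (2 : Fin 4) := by
  obtain ⟨h1, h2, h3⟩ := h
  refine ⟨Prod.ext ?_ ?_, ?_⟩
  · apply Fin.ext
    rw [h3, val_add_one ht]
  · exact Fin.ext (by simpa using h1)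
  · exact Fin.ext (by simpa using h2)

/-- The invariant maintained by every colouring sequence on the ring. -/
structure RInv (t : ℕ) [NeZero t] (s : St (Fin t × Fin 4)) : Prop where
  start : ∀ i : Fin t, s.col (i, (0 : Fin 4)) = .green
  recvG : ∀ i : Fin t, s.col (i, (2 : Fin 4)) = .green →
    s.col (i + 1, (1 : Fin 4)) = .green
  sendG : ∀ i : Fin t, s.col (i + 1, (1 : Fin 4)) = .green →
    s.col (i, (2 : Fin 4)) ≠ .red

lemma rinv_init (B : ℕ → ℕ) : RInv t (init (ringGraph t) B) := by
  constructor <;> intro i <;> simp [init, ringGraph]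

lemma rinv_step (ht : 1 < t) {ρ : Rule} {s s' : St (Fin t × Fin 4)}
    (h : Step (ringGraph t) ρ s s') (hI : RInv t s) : RInv t s' := by
  constructor
  · intro i; exact step_green h (hI.start i)
  · intro i hg
    by_cases hold : s.col (i, (2 : Fin 4)) = .green
    · exact step_green h (hI.recvG i hold)
    · rcases step_new_green h _ hold hg with ⟨r, hm, _⟩ | ⟨w, hm, hw⟩ | hend
      · exact absurd hm.1 (show ¬ ((2 : Fin 4) : ℕ) = 1 by decide)
      · obtain ⟨hw1, _⟩ := matched_elim ht hm
        subst hw1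
        exact step_green h hw
      · exact absurd hend (show ¬ ((2 : Fin 4) : ℕ) = 3 by decide)
  · intro i hg
    by_cases hold : s.col (i + 1, (1 : Fin 4)) = .green
    · exact step_ne_red h (hI.sendG i hold)
    · rcases step_new_green h _ hold hg with ⟨r, hm, hr⟩ | ⟨w, hm, _⟩ | hend
      · obtain ⟨hu, hr2⟩ := matched_elim ht hm
        have h1 : r.1 = i := by
          have := congrArg Prod.fst hu
          simpa using add_right_cancel this.symm
        have : r = (i, (2 : Fin 4)) := by
          rw [← h1, ← hr2]
        rw [this] at hr
        exact step_ne_red h (by rw [hr]; simp)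
      · exact absurd hm.2.1
          (show ¬ ((1 : Fin 4) : ℕ) = 2 by decide)
      · exact absurd hend
          (show ¬ ((1 : Fin 4) : ℕ) = 3 by decide)

/-! ### The no-token invariant -/

def Qinv (t : ℕ) (s : St (Fin t × Fin 4)) : Prop :=
  (∀ u : Fin t × Fin 4, (u.2 : ℕ) = 2 → s.col u = .red) ∧
  (∀ u : Fin t × Fin 4, (u.2 : ℕ) = 1 → s.col u ≠ .green)

lemma qinv_init (B : ℕ → ℕ) : Qinv t (init (ringGraph t) B) := by
  constructor <;> intro u hu <;> simp [init, ringGraph, show (u.2 : ℕ) ≠ 0 by omega, show u.2 ≠ 0 from fun h => by simp [h] at hu]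

lemma qinv_step {ρ : Rule} {s s' : St (Fin t × Fin 4)}
    (hρ : ρ ≠ .recvYelTok) (h : Step (ringGraph t) ρ s s') (hQ : Qinv t s) :
    Qinv t s' := by
  cases h with
  | @sendYel _ v u hv hc hp hu =>
    constructor
    · intro w hw
      dsimp only; rw [Function.update_apply, if_neg]
      · exact hQ.1 w hw
      · rintro rfl; rw [hv] at hw; omega
    · intro w hw
      dsimp only; rw [Function.update_apply]
      split
      · simp
      · exact hQ.2 w hw
  | @recvYel _ v u w hv hc hm hw hp hu =>
    exact absurd hu (hQ.2 u (by have := hp.2; rw [hv] at this; omega))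
  | recvYelTok _ _ _ _ _ => exact absurd rfl hρ
  | @sendGrn _ v r hs hv hm hr =>
    exact absurd hr (by rw [hQ.1 r hm.2.1]; simp)
  | @recvGrn _ v u w hr hv hp hu hm hw =>
    exact absurd hv (by rw [hQ.1 v hr]; simp)
  | @endYel _ v u hv hc hp hu =>
    exact absurd hu (by rw [hQ.1 u (by have := hp.2; rw [hv] at this; omega)]; simp)
  | @endGrn _ v hv hc =>
    constructor
    · intro w hw
      dsimp only; rw [Function.update_apply, if_neg]
      · exact hQ.1 w hw
      · rintro rfl; rw [hv] at hw; omega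
    · intro w hw
      dsimp only; rw [Function.update_apply, if_neg]
      · exact hQ.2 w hw
      · rintro rfl; rw [hv] at hw; omega

/-! ### Dichotomy at a maximal state -/

open Fin.NatCast in
lemma dichotomy (ht : 1 < t) {s : St (Fin t × Fin 4)} (hI : RInv t s)
    (hmax : MaximalFrom (ringGraph t) s) :
    (∀ i : Fin t, s.col (i, (2 : Fin 4)) = .red) ∨ Completes s := by
  -- no send is red
  have hsend_ne_red : ∀ i : Fin t, s.col (i, (1 : Fin 4)) ≠ .red := by
    intro i hred
    exact hmax _ _ (Step.sendYel (v := (i, (1 : Fin 4))) (u := (i, (0 : Fin 4)))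
      (show ((1 : Fin 4) : ℕ) = 1 by decide) hred
      (show (ringGraph t).pred (i, (0 : Fin 4)) (i, (1 : Fin 4)) from ⟨rfl, rfl⟩)
      (hI.start i))
  -- yellow propagates backwards around the ring
  have hprop : ∀ i : Fin t, s.col (i + 1, (1 : Fin 4)) = .yellow →
      s.col (i, (1 : Fin 4)) = .yellow ∧ s.col (i, (2 : Fin 4)) = .red := by
    intro i hy
    have hrne : s.col (i, (2 : Fin 4)) ≠ .yellow := by
      intro hry
      exact hmax _ _ (Step.sendGrn (v := (i + 1, (1 : Fin 4))) (r := (i, (2 : Fin 4)))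
        (show ((1 : Fin 4) : ℕ) = 1 by decide) hy
        (matched_succ ht i) hry)
    have hrne2 : s.col (i, (2 : Fin 4)) ≠ .green := by
      intro hrg
      rw [hI.recvG i hrg] at hy; cases hy
    have hrred : s.col (i, (2 : Fin 4)) = .red := by
      cases hc : s.col (i, (2 : Fin 4)) with
      | red => rfl
      | yellow => exact absurd hc hrne
      | green => exact absurd hc hrne2
    refine ⟨?_, hrred⟩
    have hsne : s.col (i, (1 : Fin 4)) ≠ .green := by
      intro hsg
      exact hmax _ _ (Step.recvYel (v := (i, (2 : Fin 4))) (u := (i, (1 : Fin 4)))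
        (w := (i + 1, (1 : Fin 4)))
        (show ((2 : Fin 4) : ℕ) = 2 by decide) hrred
        (matched_succ ht i) hy
        (show (ringGraph t).pred (i, (1 : Fin 4)) (i, (2 : Fin 4)) from ⟨rfl, rfl⟩)
        hsg)
    cases hc : s.col (i, (1 : Fin 4)) with
    | red => exact absurd hc (hsend_ne_red i)
    | yellow => rfl
    | green => exact absurd hc hsne
  by_cases hyel : ∃ j : Fin t, s.col (j, (1 : Fin 4)) = .yellow
  · -- some send yellow ⇒ all sends yellow and all receives red
    obtain ⟨j, hj⟩ := hyel
    have hall : ∀ k : ℕ, s.col (j - (k : Fin t), (1 : Fin 4)) = .yellow := by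
      intro k
      induction k with
      | zero => simpa using hj
      | succ k ih =>
        have heq : (j - ((k : Fin t) + 1)) + 1 = j - (k : Fin t) := by rw [sub_add_eq_sub_sub, sub_add_cancel]
        have := (hprop (j - ((k : Fin t) + 1)) (by rw [heq]; exact ih)).1
        simpa [Nat.cast_add, Nat.cast_one] using this
    have hally : ∀ i : Fin t, s.col (i, (1 : Fin 4)) = .yellow := by
      intro i
      have := hall ((j - i).val)
      rwa [Fin.cast_val_eq_self, sub_sub_cancel] at this
    left
    intro i
    exact (hprop i (hally (i + 1))).2
  · -- all sends green ⇒ complete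
    push_neg at hyel
    have hsg : ∀ i : Fin t, s.col (i, (1 : Fin 4)) = .green := by
      intro i
      cases hc : s.col (i, (1 : Fin 4)) with
      | red => exact absurd hc (hsend_ne_red i)
      | yellow => exact absurd hc (hyel i)
      | green => rfl
    have hrg : ∀ i : Fin t, s.col (i, (2 : Fin 4)) = .green := by
      intro i
      have hnred := hI.sendG i (hsg (i + 1))
      cases hc : s.col (i, (2 : Fin 4)) with
      | red => exact absurd hc hnred
      | yellow =>
        exact (hmax _ _ (Step.recvGrn (v := (i, (2 : Fin 4))) (u := (i, (1 : Fin 4)))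
          (w := (i + 1, (1 : Fin 4)))
          (show ((2 : Fin 4) : ℕ) = 2 by decide) hc
          (show (ringGraph t).pred (i, (1 : Fin 4)) (i, (2 : Fin 4)) from ⟨rfl, rfl⟩)
          (hsg i) (matched_succ ht i) (hsg (i + 1)))).elim
      | green => rfl
    have heg : ∀ i : Fin t, s.col (i, (3 : Fin 4)) = .green := by
      intro i
      cases hc : s.col (i, (3 : Fin 4)) with
      | red =>
        exact (hmax _ _ (Step.endYel (v := (i, (3 : Fin 4))) (u := (i, (2 : Fin 4)))
          (show ((3 : Fin 4) : ℕ) = 3 by decide) hc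
          (show (ringGraph t).pred (i, (2 : Fin 4)) (i, (3 : Fin 4)) from ⟨rfl, rfl⟩)
          (hrg i))).elim
      | yellow =>
        exact (hmax _ _ (Step.endGrn (v := (i, (3 : Fin 4)))
          (show ((3 : Fin 4) : ℕ) = 3 by decide) hc)).elim
      | green => rfl
    right
    rintro ⟨i, k⟩
    fin_cases k
    · exact hI.start i
    · exact hsg i
    · exact hrg i
    · exact heg i

end TRing

/-- **The t-Ring Lemma.** Let `G` be a communication graph comprising a single
`t`-ring (`t > 1`). Any (maximal) colouring sequence on `G` completes if and only
if the buffered-receive rule `recv→•yel` is invoked at least once. -/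
theorem t_ring_lemma (t : ℕ) (ht : 1 < t) (B : ℕ → ℕ)
    (l : List (Rule × St (Fin t × Fin 4)))
    (hseq : IsSeq (ringGraph t) (init (ringGraph t) B) l)
    (hmax : MaximalFrom (ringGraph t) (finalSt (init (ringGraph t) B) l)) :
    Completes (finalSt (init (ringGraph t) B) l) ↔
      ∃ p ∈ l, p.1 = Rule.recvYelTok := by
  haveI : NeZero t := ⟨by omega⟩
  constructor
  · -- completion forces a buffered receive
    intro hcomp
    by_contra hno
    push_neg at hno
    have key : ∀ (s : St (Fin t × Fin 4)) (l' : List (Rule × St (Fin t × Fin 4))),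
        TRing.Qinv t s → IsSeq (ringGraph t) s l' →
        (∀ p ∈ l', p.1 ≠ Rule.recvYelTok) → TRing.Qinv t (finalSt s l') := by
      intro s l'
      induction l' generalizing s with
      | nil => intro hs _ _; exact hs
      | cons p l' ih =>
        intro hs hsq hn
        rw [TRing.finalSt_cons]
        exact ih _ (TRing.qinv_step (hn p List.mem_cons_self) hsq.1 hs)
          hsq.2 (fun q hq => hn q (List.mem_cons_of_mem _ hq))
    have hQ := key _ l (TRing.qinv_init B) hseq hno
    have hv := hcomp ((⟨0, by omega⟩ : Fin t), (2 : Fin 4))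
    have hred := hQ.1 ((⟨0, by omega⟩ : Fin t), (2 : Fin 4))
      (show ((2 : Fin 4) : ℕ) = 2 by decide)
    rw [hv] at hred
    exact Colour.noConfusion hred
  · -- a buffered receive forces completion
    rintro ⟨p, hmem, hρ⟩
    obtain ⟨l1, l2, rfl⟩ := List.append_of_mem hmem
    obtain ⟨ρ, s2⟩ := p
    obtain rfl : ρ = Rule.recvYelTok := hρ
    obtain ⟨hseq1, hstep, hseq3⟩ := TRing.isSeq_append hseq
    have hI := TRing.seq_inv (G := ringGraph t)
      (fun ρ s s' hs hst => TRing.rinv_step ht hst hs) (TRing.rinv_init B) hseq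
    cases hstep with
    | @recvYelTok _ v w hv hc hm hw hp =>
      have hfin : finalSt (init (ringGraph t) B)
            (l1 ++ (Rule.recvYelTok,
              (⟨Function.update (finalSt (init (ringGraph t) B) l1).col v .yellow,
                Function.update (finalSt (init (ringGraph t) B) l1).tok v true,
                Function.update (finalSt (init (ringGraph t) B) l1).pool
                  ((ringGraph t).comp v)
                  ((finalSt (init (ringGraph t) B) l1).pool ((ringGraph t).comp v) - 1)⟩
                : St (Fin t × Fin 4))) :: l2)
          = finalSt (⟨Function.update (finalSt (init (ringGraph t) B) l1).col v .yellow,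
                Function.update (finalSt (init (ringGraph t) B) l1).tok v true,
                Function.update (finalSt (init (ringGraph t) B) l1).pool
                  ((ringGraph t).comp v)
                  ((finalSt (init (ringGraph t) B) l1).pool ((ringGraph t).comp v) - 1)⟩
                : St (Fin t × Fin 4)) l2 := by
        rw [TRing.finalSt_append, TRing.finalSt_cons]
      have hmono := TRing.seq_mono hseq3 v
      have hne := TRing.ne_red_of_rk
        (le_trans (by simp [TRing.rk]) hmono)
      rcases TRing.dichotomy ht hI hmax with hall | hcomp
      · have hveq : v = (v.1, (2 : Fin 4)) :=
          Prod.ext rfl (Fin.ext (by simpa [ringGraph] using hv))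
        rw [hfin] at hall
        have hred := hall v.1
        rw [← hveq] at hred
        exact absurd hred hne
      · exact hcomp
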